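/- The set p4m = {g(m,r,t) : m ∈ {0,1}³, r ∈ ℤ³, t ∈ ℤ³} is a subgroup of GL₄(ℝ): it contains the 4×4 identity matrix, the product of any two of its elements again lies in p4m, and the inverse of any of its elements lies in p4m. (Thus p4m, comprising all compositions of integer translations, rotations by multiples of 90° about the coordinate axes, and axis-aligned mirror reflections, is a symmetry group under matrix multiplication.) -/

import Mathlib

open Matrix Real

/-- `R₁(m,r)`: rotation by `r·90°` (with optional mirroring `m`) acting in the
rows/columns 1,2 of a 4×4 homogeneous-coordinate matrix. -/
noncomputable def R1 (m : Fin 2) (r : ℤ) : Matrix (Fin 4) (Fin 4) ℝ :=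
  !![(-1 : ℝ) ^ (m : ℕ) * Real.cos (r * (π / 2)),
      -((-1 : ℝ) ^ (m : ℕ)) * Real.sin (r * (π / 2)), 0, 0;
     Real.sin (r * (π / 2)), Real.cos (r * (π / 2)), 0, 0;
     0, 0, 1, 0;
     0, 0, 0, 1]

/-- `R₂(m,r)`: the analogous matrix whose 2×2 block occupies rows/columns 2 and 3,
with 1's at positions (1,1) and (4,4). -/
noncomputable def R2 (m : Fin 2) (r : ℤ) : Matrix (Fin 4) (Fin 4) ℝ :=
  !![1, 0, 0, 0;
     0, (-1 : ℝ) ^ (m : ℕ) * Real.cos (r * (π / 2)),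
        -((-1 : ℝ) ^ (m : ℕ)) * Real.sin (r * (π / 2)), 0;
     0, Real.sin (r * (π / 2)), Real.cos (r * (π / 2)), 0;
     0, 0, 0, 1]

/-- `R₃(m,r)`: the analogous matrix whose 2×2 block occupies rows/columns 3 and 1
(in that order), with 1's at positions (2,2) and (4,4). -/
noncomputable def R3 (m : Fin 2) (r : ℤ) : Matrix (Fin 4) (Fin 4) ℝ :=
  !![Real.cos (r * (π / 2)), 0, Real.sin (r * (π / 2)), 0;
     0, 1, 0, 0;
     -((-1 : ℝ) ^ (m : ℕ)) * Real.sin (r * (π / 2)), 0,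
        (-1 : ℝ) ^ (m : ℕ) * Real.cos (r * (π / 2)), 0;
     0, 0, 0, 1]

/-- `T(t)`: the 4×4 identity matrix with its fourth column replaced by `(t₁,t₂,t₃,1)ᵀ`. -/
def T (t : ℤ × ℤ × ℤ) : Matrix (Fin 4) (Fin 4) ℝ :=
  !![1, 0, 0, (t.1 : ℝ);
     0, 1, 0, (t.2.1 : ℝ);
     0, 0, 1, (t.2.2 : ℝ);
     0, 0, 0, 1]

/-- `g(m,r,t) = R₁(m₁,r₁)·R₂(m₂,r₂)·R₃(m₃,r₃)·T(t)`. -/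
noncomputable def g (m : Fin 2 × Fin 2 × Fin 2) (r t : ℤ × ℤ × ℤ) :
    Matrix (Fin 4) (Fin 4) ℝ :=
  R1 m.1 r.1 * R2 m.2.1 r.2.1 * R3 m.2.2 r.2.2 * T t

/-- The set `p4m = {g(m,r,t)}`. -/
def p4m : Set (Matrix (Fin 4) (Fin 4) ℝ) :=
  {A | ∃ (m : Fin 2 × Fin 2 × Fin 2) (r t : ℤ × ℤ × ℤ), A = g m r t}

/-- The set `p4 = {g(0,r,t)}` (no mirroring). -/
def p4 : Set (Matrix (Fin 4) (Fin 4) ℝ) :=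
  {A | ∃ (r t : ℤ × ℤ × ℤ), A = g (0, 0, 0) r t}

/-! ### Auxiliary machinery: signed permutation matrices with translation -/

/-- Signed permutation matrix (column convention). -/
noncomputable def Qm (σ : Equiv.Perm (Fin 3)) (ε : Fin 3 → ℝ) : Matrix (Fin 3) (Fin 3) ℝ :=
  Matrix.of fun i j => if σ j = i then ε j else 0

/-- Column vector. -/
def colM (v : Fin 3 → ℝ) : Matrix (Fin 3) (Fin 1) ℝ := Matrix.of fun i _ => v i

/-- Identification of `Fin 4` with `Fin 3 ⊕ Fin 1`. -/
def e4 : Fin 4 ≃ Fin 3 ⊕ Fin 1 where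
  toFun i := if h : (i : ℕ) < 3 then Sum.inl ⟨i, h⟩ else Sum.inr 0
  invFun s := Sum.elim Fin.castSucc (fun _ => 3) s
  left_inv := by decide
  right_inv := by decide

/-- Homogeneous signed-permutation-plus-translation matrix. -/
noncomputable def MM (σ : Equiv.Perm (Fin 3)) (ε v : Fin 3 → ℝ) : Matrix (Fin 4) (Fin 4) ℝ :=
  (Matrix.fromBlocks (Qm σ ε) (colM v) 0 1).submatrix e4 e4

lemma Qm_mul (σ σ' : Equiv.Perm (Fin 3)) (ε ε' : Fin 3 → ℝ) :
    Qm σ ε * Qm σ' ε' = Qm (σ * σ') (fun j => ε (σ' j) * ε' j) := by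
  ext i j
  rw [Matrix.mul_apply, Finset.sum_eq_single (σ' j)]
  · simp only [Qm, Matrix.of_apply, Equiv.Perm.mul_apply, if_pos rfl]
    split_ifs with h <;> simp_all
  · intro b _ hb
    have h : ¬ (σ' j = b) := fun h => hb h.symm
    simp [Qm, h]
  · simp

lemma Qm_mul_col (σ : Equiv.Perm (Fin 3)) (ε v : Fin 3 → ℝ) :
    Qm σ ε * colM v = colM (fun i => ε (σ⁻¹ i) * v (σ⁻¹ i)) := by
  ext i j
  rw [Matrix.mul_apply, Finset.sum_eq_single (σ⁻¹ i)]
  · simp [Qm, colM, fun x => show σ (σ⁻¹ x) = x from (Equiv.eq_symm_apply σ).mp rfl]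
  · intro b _ hb
    have h : ¬ (σ b = i) := fun h => hb (by rw [← h]; simp)
    simp [Qm, colM, h]
  · simp

lemma MM_mul (σ σ' : Equiv.Perm (Fin 3)) (ε ε' v v' : Fin 3 → ℝ) :
    MM σ ε v * MM σ' ε' v' =
      MM (σ * σ') (fun j => ε (σ' j) * ε' j)
        (fun i => ε (σ⁻¹ i) * v' (σ⁻¹ i) + v i) := by
  unfold MM
  rw [Matrix.submatrix_mul_equiv, Matrix.fromBlocks_multiply]
  have hA : Qm σ ε * Qm σ' ε' + colM v * (0 : Matrix (Fin 1) (Fin 3) ℝ)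
      = Qm (σ * σ') (fun j => ε (σ' j) * ε' j) := by
    rw [Qm_mul, Matrix.mul_zero, add_zero]
  have hBk : Qm σ ε * colM v' + colM v * (1 : Matrix (Fin 1) (Fin 1) ℝ)
      = colM (fun i => ε (σ⁻¹ i) * v' (σ⁻¹ i) + v i) := by
    rw [Matrix.mul_one, Qm_mul_col]
    ext i j
    simp [colM]
  have hC : (0 : Matrix (Fin 1) (Fin 3) ℝ) * Qm σ' ε'
      + (1 : Matrix (Fin 1) (Fin 1) ℝ) * (0 : Matrix (Fin 1) (Fin 3) ℝ) = 0 := by simp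
  have hD : (0 : Matrix (Fin 1) (Fin 3) ℝ) * colM v'
      + (1 : Matrix (Fin 1) (Fin 1) ℝ) * 1 = 1 := by simp
  rw [hA, hBk, hC, hD]

lemma Qm_one : Qm 1 (fun _ => 1) = 1 := by
  ext i j
  simp [Qm, Matrix.one_apply, eq_comm]

lemma MM_one : MM 1 (fun _ => 1) (fun _ => 0) = 1 := by
  unfold MM
  have : colM (fun _ => (0:ℝ)) = 0 := by ext i j; simp [colM]
  rw [Qm_one, this, Matrix.fromBlocks_one, Matrix.submatrix_one_equiv]

lemma MM_congr {σ σ' : Equiv.Perm (Fin 3)} {ε ε' v v' : Fin 3 → ℝ}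
    (h1 : σ = σ') (h2 : ∀ j, ε j = ε' j) (h3 : ∀ i, v i = v' i) :
    MM σ ε v = MM σ' ε' v' := by
  rw [h1, show ε = ε' from funext h2, show v = v' from funext h3]

lemma e4_0 : e4 0 = Sum.inl 0 := by decide
lemma e4_1 : e4 1 = Sum.inl 1 := by decide
lemma e4_2 : e4 2 = Sum.inl 2 := by decide
lemma e4_3 : e4 3 = Sum.inr 0 := by decide

/-- Explicit form of `MM`. -/
lemma MM_eq (σ : Equiv.Perm (Fin 3)) (ε v : Fin 3 → ℝ) :
    MM σ ε v =
      !![if σ 0 = 0 then ε 0 else 0, if σ 1 = 0 then ε 1 else 0, if σ 2 = 0 then ε 2 else 0, v 0;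
         if σ 0 = 1 then ε 0 else 0, if σ 1 = 1 then ε 1 else 0, if σ 2 = 1 then ε 2 else 0, v 1;
         if σ 0 = 2 then ε 0 else 0, if σ 1 = 2 then ε 1 else 0, if σ 2 = 2 then ε 2 else 0, v 2;
         0, 0, 0, 1] := by
  ext i j
  fin_cases i <;> fin_cases j <;>
    simp [MM, Qm, colM, e4_0, e4_1, e4_2, e4_3]

/-! ### Named permutations of `Fin 3` -/

def s01 : Equiv.Perm (Fin 3) := Equiv.swap 0 1
def s02 : Equiv.Perm (Fin 3) := Equiv.swap 0 2
def s12 : Equiv.Perm (Fin 3) := Equiv.swap 1 2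
def c012 : Equiv.Perm (Fin 3) := Equiv.swap 0 1 * Equiv.swap 1 2
def c021 : Equiv.Perm (Fin 3) := Equiv.swap 0 1 * Equiv.swap 0 2

lemma perm_cases (σ : Equiv.Perm (Fin 3)) :
    σ = 1 ∨ σ = s01 ∨ σ = s02 ∨ σ = s12 ∨ σ = c012 ∨ σ = c021 := by
  revert σ; decide

/-! ### Special values of cos and sin -/

lemma cos22 : Real.cos ((2:ℝ) * (π / 2)) = -1 := by
  rw [show (2:ℝ) * (π / 2) = π by ring]; simp

lemma sin22 : Real.sin ((2:ℝ) * (π / 2)) = 0 := by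
  rw [show (2:ℝ) * (π / 2) = π by ring]; simp

lemma cos32 : Real.cos ((3:ℝ) * (π / 2)) = 0 := by
  rw [show (3:ℝ) * (π / 2) = π + π / 2 by ring, Real.cos_add]; simp

lemma sin32 : Real.sin ((3:ℝ) * (π / 2)) = -1 := by
  rw [show (3:ℝ) * (π / 2) = π + π / 2 by ring, Real.sin_add]; simp

lemma cos_mod (r : ℤ) :
    Real.cos ((r : ℝ) * (π / 2)) = Real.cos (((r % 4 : ℤ) : ℝ) * (π / 2)) := by
  conv_lhs => rw [show r = r % 4 + 4 * (r / 4) by omega]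
  push_cast
  rw [show (((r % 4 : ℤ) : ℝ) + 4 * ((r / 4 : ℤ) : ℝ)) * (π / 2)
        = ((r % 4 : ℤ) : ℝ) * (π / 2) + ((r / 4 : ℤ) : ℝ) * (2 * π) by ring]
  exact Real.cos_add_int_mul_two_pi _ _

lemma sin_mod (r : ℤ) :
    Real.sin ((r : ℝ) * (π / 2)) = Real.sin (((r % 4 : ℤ) : ℝ) * (π / 2)) := by
  conv_lhs => rw [show r = r % 4 + 4 * (r / 4) by omega]
  push_cast
  rw [show (((r % 4 : ℤ) : ℝ) + 4 * ((r / 4 : ℤ) : ℝ)) * (π / 2)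
        = ((r % 4 : ℤ) : ℝ) * (π / 2) + ((r / 4 : ℤ) : ℝ) * (2 * π) by ring]
  exact Real.sin_add_int_mul_two_pi _ _

/-! ### The 24 concrete rotation generators in `MM` form -/

lemma R1c_0_0 : R1 0 (0 : ℤ) = MM (1 : Equiv.Perm (Fin 3)) ![(1:ℝ), (1:ℝ), (1:ℝ)] (fun _ => 0) := by
  rw [MM_eq]
  ext i j
  fin_cases i <;> fin_cases j <;>
    norm_num [R1, s01, s02, s12, Equiv.swap_apply_def, cos22, sin22, cos32, sin32, Fin.ext_iff, Matrix.cons_val_two, Matrix.tail_cons, Matrix.head_cons]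

lemma R1c_0_1 : R1 0 (1 : ℤ) = MM s01 ![(1:ℝ), (-1:ℝ), (1:ℝ)] (fun _ => 0) := by
  rw [MM_eq]
  ext i j
  fin_cases i <;> fin_cases j <;>
    norm_num [R1, s01, s02, s12, Equiv.swap_apply_def, cos22, sin22, cos32, sin32, Fin.ext_iff, Matrix.cons_val_two, Matrix.tail_cons, Matrix.head_cons]

lemma R1c_0_2 : R1 0 (2 : ℤ) = MM (1 : Equiv.Perm (Fin 3)) ![(-1:ℝ), (-1:ℝ), (1:ℝ)] (fun _ => 0) := by
  rw [MM_eq]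
  ext i j
  fin_cases i <;> fin_cases j <;>
    norm_num [R1, s01, s02, s12, Equiv.swap_apply_def, cos22, sin22, cos32, sin32, Fin.ext_iff, Matrix.cons_val_two, Matrix.tail_cons, Matrix.head_cons]

lemma R1c_0_3 : R1 0 (3 : ℤ) = MM s01 ![(-1:ℝ), (1:ℝ), (1:ℝ)] (fun _ => 0) := by
  rw [MM_eq]
  ext i j
  fin_cases i <;> fin_cases j <;>
    norm_num [R1, s01, s02, s12, Equiv.swap_apply_def, cos22, sin22, cos32, sin32, Fin.ext_iff, Matrix.cons_val_two, Matrix.tail_cons, Matrix.head_cons]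

lemma R1c_1_0 : R1 1 (0 : ℤ) = MM (1 : Equiv.Perm (Fin 3)) ![(-1:ℝ), (1:ℝ), (1:ℝ)] (fun _ => 0) := by
  rw [MM_eq]
  ext i j
  fin_cases i <;> fin_cases j <;>
    norm_num [R1, s01, s02, s12, Equiv.swap_apply_def, cos22, sin22, cos32, sin32, Fin.ext_iff, Matrix.cons_val_two, Matrix.tail_cons, Matrix.head_cons]

lemma R1c_1_1 : R1 1 (1 : ℤ) = MM s01 ![(1:ℝ), (1:ℝ), (1:ℝ)] (fun _ => 0) := by
  rw [MM_eq]
  ext i j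
  fin_cases i <;> fin_cases j <;>
    norm_num [R1, s01, s02, s12, Equiv.swap_apply_def, cos22, sin22, cos32, sin32, Fin.ext_iff, Matrix.cons_val_two, Matrix.tail_cons, Matrix.head_cons]

lemma R1c_1_2 : R1 1 (2 : ℤ) = MM (1 : Equiv.Perm (Fin 3)) ![(1:ℝ), (-1:ℝ), (1:ℝ)] (fun _ => 0) := by
  rw [MM_eq]
  ext i j
  fin_cases i <;> fin_cases j <;>
    norm_num [R1, s01, s02, s12, Equiv.swap_apply_def, cos22, sin22, cos32, sin32, Fin.ext_iff, Matrix.cons_val_two, Matrix.tail_cons, Matrix.head_cons]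

lemma R1c_1_3 : R1 1 (3 : ℤ) = MM s01 ![(-1:ℝ), (-1:ℝ), (1:ℝ)] (fun _ => 0) := by
  rw [MM_eq]
  ext i j
  fin_cases i <;> fin_cases j <;>
    norm_num [R1, s01, s02, s12, Equiv.swap_apply_def, cos22, sin22, cos32, sin32, Fin.ext_iff, Matrix.cons_val_two, Matrix.tail_cons, Matrix.head_cons]

lemma R2c_0_0 : R2 0 (0 : ℤ) = MM (1 : Equiv.Perm (Fin 3)) ![(1:ℝ), (1:ℝ), (1:ℝ)] (fun _ => 0) := by
  rw [MM_eq]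
  ext i j
  fin_cases i <;> fin_cases j <;>
    norm_num [R2, s01, s02, s12, Equiv.swap_apply_def, cos22, sin22, cos32, sin32, Fin.ext_iff, Matrix.cons_val_two, Matrix.tail_cons, Matrix.head_cons]

lemma R2c_0_1 : R2 0 (1 : ℤ) = MM s12 ![(1:ℝ), (1:ℝ), (-1:ℝ)] (fun _ => 0) := by
  rw [MM_eq]
  ext i j
  fin_cases i <;> fin_cases j <;>
    norm_num [R2, s01, s02, s12, Equiv.swap_apply_def, cos22, sin22, cos32, sin32, Fin.ext_iff, Matrix.cons_val_two, Matrix.tail_cons, Matrix.head_cons]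

lemma R2c_0_2 : R2 0 (2 : ℤ) = MM (1 : Equiv.Perm (Fin 3)) ![(1:ℝ), (-1:ℝ), (-1:ℝ)] (fun _ => 0) := by
  rw [MM_eq]
  ext i j
  fin_cases i <;> fin_cases j <;>
    norm_num [R2, s01, s02, s12, Equiv.swap_apply_def, cos22, sin22, cos32, sin32, Fin.ext_iff, Matrix.cons_val_two, Matrix.tail_cons, Matrix.head_cons]

lemma R2c_0_3 : R2 0 (3 : ℤ) = MM s12 ![(1:ℝ), (-1:ℝ), (1:ℝ)] (fun _ => 0) := by
  rw [MM_eq]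
  ext i j
  fin_cases i <;> fin_cases j <;>
    norm_num [R2, s01, s02, s12, Equiv.swap_apply_def, cos22, sin22, cos32, sin32, Fin.ext_iff, Matrix.cons_val_two, Matrix.tail_cons, Matrix.head_cons]

lemma R2c_1_0 : R2 1 (0 : ℤ) = MM (1 : Equiv.Perm (Fin 3)) ![(1:ℝ), (-1:ℝ), (1:ℝ)] (fun _ => 0) := by
  rw [MM_eq]
  ext i j
  fin_cases i <;> fin_cases j <;>
    norm_num [R2, s01, s02, s12, Equiv.swap_apply_def, cos22, sin22, cos32, sin32, Fin.ext_iff, Matrix.cons_val_two, Matrix.tail_cons, Matrix.head_cons]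

lemma R2c_1_1 : R2 1 (1 : ℤ) = MM s12 ![(1:ℝ), (1:ℝ), (1:ℝ)] (fun _ => 0) := by
  rw [MM_eq]
  ext i j
  fin_cases i <;> fin_cases j <;>
    norm_num [R2, s01, s02, s12, Equiv.swap_apply_def, cos22, sin22, cos32, sin32, Fin.ext_iff, Matrix.cons_val_two, Matrix.tail_cons, Matrix.head_cons]

lemma R2c_1_2 : R2 1 (2 : ℤ) = MM (1 : Equiv.Perm (Fin 3)) ![(1:ℝ), (1:ℝ), (-1:ℝ)] (fun _ => 0) := by
  rw [MM_eq]
  ext i j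
  fin_cases i <;> fin_cases j <;>
    norm_num [R2, s01, s02, s12, Equiv.swap_apply_def, cos22, sin22, cos32, sin32, Fin.ext_iff, Matrix.cons_val_two, Matrix.tail_cons, Matrix.head_cons]

lemma R2c_1_3 : R2 1 (3 : ℤ) = MM s12 ![(1:ℝ), (-1:ℝ), (-1:ℝ)] (fun _ => 0) := by
  rw [MM_eq]
  ext i j
  fin_cases i <;> fin_cases j <;>
    norm_num [R2, s01, s02, s12, Equiv.swap_apply_def, cos22, sin22, cos32, sin32, Fin.ext_iff, Matrix.cons_val_two, Matrix.tail_cons, Matrix.head_cons]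

lemma R3c_0_0 : R3 0 (0 : ℤ) = MM (1 : Equiv.Perm (Fin 3)) ![(1:ℝ), (1:ℝ), (1:ℝ)] (fun _ => 0) := by
  rw [MM_eq]
  ext i j
  fin_cases i <;> fin_cases j <;>
    norm_num [R3, s01, s02, s12, Equiv.swap_apply_def, cos22, sin22, cos32, sin32, Fin.ext_iff, Matrix.cons_val_two, Matrix.tail_cons, Matrix.head_cons]

lemma R3c_0_1 : R3 0 (1 : ℤ) = MM s02 ![(-1:ℝ), (1:ℝ), (1:ℝ)] (fun _ => 0) := by
  rw [MM_eq]
  ext i j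
  fin_cases i <;> fin_cases j <;>
    norm_num [R3, s01, s02, s12, Equiv.swap_apply_def, cos22, sin22, cos32, sin32, Fin.ext_iff, Matrix.cons_val_two, Matrix.tail_cons, Matrix.head_cons]

lemma R3c_0_2 : R3 0 (2 : ℤ) = MM (1 : Equiv.Perm (Fin 3)) ![(-1:ℝ), (1:ℝ), (-1:ℝ)] (fun _ => 0) := by
  rw [MM_eq]
  ext i j
  fin_cases i <;> fin_cases j <;>
    norm_num [R3, s01, s02, s12, Equiv.swap_apply_def, cos22, sin22, cos32, sin32, Fin.ext_iff, Matrix.cons_val_two, Matrix.tail_cons, Matrix.head_cons]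

lemma R3c_0_3 : R3 0 (3 : ℤ) = MM s02 ![(1:ℝ), (1:ℝ), (-1:ℝ)] (fun _ => 0) := by
  rw [MM_eq]
  ext i j
  fin_cases i <;> fin_cases j <;>
    norm_num [R3, s01, s02, s12, Equiv.swap_apply_def, cos22, sin22, cos32, sin32, Fin.ext_iff, Matrix.cons_val_two, Matrix.tail_cons, Matrix.head_cons]

lemma R3c_1_0 : R3 1 (0 : ℤ) = MM (1 : Equiv.Perm (Fin 3)) ![(1:ℝ), (1:ℝ), (-1:ℝ)] (fun _ => 0) := by
  rw [MM_eq]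
  ext i j
  fin_cases i <;> fin_cases j <;>
    norm_num [R3, s01, s02, s12, Equiv.swap_apply_def, cos22, sin22, cos32, sin32, Fin.ext_iff, Matrix.cons_val_two, Matrix.tail_cons, Matrix.head_cons]

lemma R3c_1_1 : R3 1 (1 : ℤ) = MM s02 ![(1:ℝ), (1:ℝ), (1:ℝ)] (fun _ => 0) := by
  rw [MM_eq]
  ext i j
  fin_cases i <;> fin_cases j <;>
    norm_num [R3, s01, s02, s12, Equiv.swap_apply_def, cos22, sin22, cos32, sin32, Fin.ext_iff, Matrix.cons_val_two, Matrix.tail_cons, Matrix.head_cons]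

lemma R3c_1_2 : R3 1 (2 : ℤ) = MM (1 : Equiv.Perm (Fin 3)) ![(-1:ℝ), (1:ℝ), (1:ℝ)] (fun _ => 0) := by
  rw [MM_eq]
  ext i j
  fin_cases i <;> fin_cases j <;>
    norm_num [R3, s01, s02, s12, Equiv.swap_apply_def, cos22, sin22, cos32, sin32, Fin.ext_iff, Matrix.cons_val_two, Matrix.tail_cons, Matrix.head_cons]

lemma R3c_1_3 : R3 1 (3 : ℤ) = MM s02 ![(-1:ℝ), (1:ℝ), (-1:ℝ)] (fun _ => 0) := by
  rw [MM_eq]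
  ext i j
  fin_cases i <;> fin_cases j <;>
    norm_num [R3, s01, s02, s12, Equiv.swap_apply_def, cos22, sin22, cos32, sin32, Fin.ext_iff, Matrix.cons_val_two, Matrix.tail_cons, Matrix.head_cons]

/-- General form of `R1` as an `MM`. -/
lemma R1_mm (m : Fin 2) (r : ℤ) :
    ∃ σ ε, (∀ i, ε i = 1 ∨ ε i = -1) ∧ R1 m r = MM σ ε (fun _ => 0) := by
  have hmod : R1 m r = R1 m (r % 4) := by
    unfold R1; rw [cos_mod, sin_mod]
  have h4 : r % 4 = 0 ∨ r % 4 = 1 ∨ r % 4 = 2 ∨ r % 4 = 3 := by omega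
  rw [hmod]
  fin_cases m <;> rcases h4 with h|h|h|h <;> rw [h]
  · exact ⟨_, _, by intro i; fin_cases i <;> norm_num, R1c_0_0⟩
  · exact ⟨_, _, by intro i; fin_cases i <;> norm_num, R1c_0_1⟩
  · exact ⟨_, _, by intro i; fin_cases i <;> norm_num, R1c_0_2⟩
  · exact ⟨_, _, by intro i; fin_cases i <;> norm_num, R1c_0_3⟩
  · exact ⟨_, _, by intro i; fin_cases i <;> norm_num, R1c_1_0⟩
  · exact ⟨_, _, by intro i; fin_cases i <;> norm_num, R1c_1_1⟩
  · exact ⟨_, _, by intro i; fin_cases i <;> norm_num, R1c_1_2⟩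
  · exact ⟨_, _, by intro i; fin_cases i <;> norm_num, R1c_1_3⟩

/-- General form of `R2` as an `MM`. -/
lemma R2_mm (m : Fin 2) (r : ℤ) :
    ∃ σ ε, (∀ i, ε i = 1 ∨ ε i = -1) ∧ R2 m r = MM σ ε (fun _ => 0) := by
  have hmod : R2 m r = R2 m (r % 4) := by
    unfold R2; rw [cos_mod, sin_mod]
  have h4 : r % 4 = 0 ∨ r % 4 = 1 ∨ r % 4 = 2 ∨ r % 4 = 3 := by omega
  rw [hmod]
  fin_cases m <;> rcases h4 with h|h|h|h <;> rw [h]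
  · exact ⟨_, _, by intro i; fin_cases i <;> norm_num, R2c_0_0⟩
  · exact ⟨_, _, by intro i; fin_cases i <;> norm_num, R2c_0_1⟩
  · exact ⟨_, _, by intro i; fin_cases i <;> norm_num, R2c_0_2⟩
  · exact ⟨_, _, by intro i; fin_cases i <;> norm_num, R2c_0_3⟩
  · exact ⟨_, _, by intro i; fin_cases i <;> norm_num, R2c_1_0⟩
  · exact ⟨_, _, by intro i; fin_cases i <;> norm_num, R2c_1_1⟩
  · exact ⟨_, _, by intro i; fin_cases i <;> norm_num, R2c_1_2⟩
  · exact ⟨_, _, by intro i; fin_cases i <;> norm_num, R2c_1_3⟩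

/-- General form of `R3` as an `MM`. -/
lemma R3_mm (m : Fin 2) (r : ℤ) :
    ∃ σ ε, (∀ i, ε i = 1 ∨ ε i = -1) ∧ R3 m r = MM σ ε (fun _ => 0) := by
  have hmod : R3 m r = R3 m (r % 4) := by
    unfold R3; rw [cos_mod, sin_mod]
  have h4 : r % 4 = 0 ∨ r % 4 = 1 ∨ r % 4 = 2 ∨ r % 4 = 3 := by omega
  rw [hmod]
  fin_cases m <;> rcases h4 with h|h|h|h <;> rw [h]
  · exact ⟨_, _, by intro i; fin_cases i <;> norm_num, R3c_0_0⟩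
  · exact ⟨_, _, by intro i; fin_cases i <;> norm_num, R3c_0_1⟩
  · exact ⟨_, _, by intro i; fin_cases i <;> norm_num, R3c_0_2⟩
  · exact ⟨_, _, by intro i; fin_cases i <;> norm_num, R3c_0_3⟩
  · exact ⟨_, _, by intro i; fin_cases i <;> norm_num, R3c_1_0⟩
  · exact ⟨_, _, by intro i; fin_cases i <;> norm_num, R3c_1_1⟩
  · exact ⟨_, _, by intro i; fin_cases i <;> norm_num, R3c_1_2⟩
  · exact ⟨_, _, by intro i; fin_cases i <;> norm_num, R3c_1_3⟩

lemma T_mm (t : ℤ × ℤ × ℤ) :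
    T t = MM 1 (fun _ => 1) ![(t.1 : ℝ), (t.2.1 : ℝ), (t.2.2 : ℝ)] := by
  rw [MM_eq]
  ext i j
  fin_cases i <;> fin_cases j <;> simp [T, Fin.ext_iff]

/-! ### Surjectivity: every signed permutation arises as `R1·R2·R3` -/

lemma surj (σ : Equiv.Perm (Fin 3)) (ε : Fin 3 → ℝ) (hε : ∀ i, ε i = 1 ∨ ε i = -1) :
    ∃ (m : Fin 2 × Fin 2 × Fin 2) (r : ℤ × ℤ × ℤ),
      R1 m.1 r.1 * R2 m.2.1 r.2.1 * R3 m.2.2 r.2.2 = MM σ ε (fun _ => 0) := by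
  rcases perm_cases σ with rfl|rfl|rfl|rfl|rfl|rfl <;>
    rcases hε 0 with h0|h0 <;> rcases hε 1 with h1|h1 <;> rcases hε 2 with h2|h2
  · refine ⟨(0, 0, 0), (0, 0, 0), ?_⟩
    show R1 0 0 * R2 0 0 * R3 0 0 = _
    rw [R1c_0_0, R2c_0_0, R3c_0_0, MM_mul, MM_mul]
    refine MM_congr (by decide) ?_ (by intro i; simp)
    intro j
    fin_cases j <;>
      simp [h0, h1, h2, s01, s02, s12, Equiv.swap_apply_def, Fin.ext_iff] <;> norm_num
  · refine ⟨(0, 0, 1), (0, 0, 0), ?_⟩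
    show R1 0 0 * R2 0 0 * R3 1 0 = _
    rw [R1c_0_0, R2c_0_0, R3c_1_0, MM_mul, MM_mul]
    refine MM_congr (by decide) ?_ (by intro i; simp)
    intro j
    fin_cases j <;>
      simp [h0, h1, h2, s01, s02, s12, Equiv.swap_apply_def, Fin.ext_iff] <;> norm_num
  · refine ⟨(0, 0, 1), (0, 2, 0), ?_⟩
    show R1 0 0 * R2 0 2 * R3 1 0 = _
    rw [R1c_0_0, R2c_0_2, R3c_1_0, MM_mul, MM_mul]
    refine MM_congr (by decide) ?_ (by intro i; simp)
    intro j
    fin_cases j <;>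
      simp [h0, h1, h2, s01, s02, s12, Equiv.swap_apply_def, Fin.ext_iff] <;> norm_num
  · refine ⟨(0, 0, 0), (0, 2, 0), ?_⟩
    show R1 0 0 * R2 0 2 * R3 0 0 = _
    rw [R1c_0_0, R2c_0_2, R3c_0_0, MM_mul, MM_mul]
    refine MM_congr (by decide) ?_ (by intro i; simp)
    intro j
    fin_cases j <;>
      simp [h0, h1, h2, s01, s02, s12, Equiv.swap_apply_def, Fin.ext_iff] <;> norm_num
  · refine ⟨(0, 0, 1), (0, 0, 2), ?_⟩
    show R1 0 0 * R2 0 0 * R3 1 2 = _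
    rw [R1c_0_0, R2c_0_0, R3c_1_2, MM_mul, MM_mul]
    refine MM_congr (by decide) ?_ (by intro i; simp)
    intro j
    fin_cases j <;>
      simp [h0, h1, h2, s01, s02, s12, Equiv.swap_apply_def, Fin.ext_iff] <;> norm_num
  · refine ⟨(0, 0, 0), (0, 0, 2), ?_⟩
    show R1 0 0 * R2 0 0 * R3 0 2 = _
    rw [R1c_0_0, R2c_0_0, R3c_0_2, MM_mul, MM_mul]
    refine MM_congr (by decide) ?_ (by intro i; simp)
    intro j
    fin_cases j <;>
      simp [h0, h1, h2, s01, s02, s12, Equiv.swap_apply_def, Fin.ext_iff] <;> norm_num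
  · refine ⟨(0, 0, 0), (0, 2, 2), ?_⟩
    show R1 0 0 * R2 0 2 * R3 0 2 = _
    rw [R1c_0_0, R2c_0_2, R3c_0_2, MM_mul, MM_mul]
    refine MM_congr (by decide) ?_ (by intro i; simp)
    intro j
    fin_cases j <;>
      simp [h0, h1, h2, s01, s02, s12, Equiv.swap_apply_def, Fin.ext_iff] <;> norm_num
  · refine ⟨(0, 0, 1), (0, 2, 2), ?_⟩
    show R1 0 0 * R2 0 2 * R3 1 2 = _
    rw [R1c_0_0, R2c_0_2, R3c_1_2, MM_mul, MM_mul]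
    refine MM_congr (by decide) ?_ (by intro i; simp)
    intro j
    fin_cases j <;>
      simp [h0, h1, h2, s01, s02, s12, Equiv.swap_apply_def, Fin.ext_iff] <;> norm_num
  · refine ⟨(0, 0, 1), (1, 2, 0), ?_⟩
    show R1 0 1 * R2 0 2 * R3 1 0 = _
    rw [R1c_0_1, R2c_0_2, R3c_1_0, MM_mul, MM_mul]
    refine MM_congr (by decide) ?_ (by intro i; simp)
    intro j
    fin_cases j <;>
      simp [h0, h1, h2, s01, s02, s12, Equiv.swap_apply_def, Fin.ext_iff] <;> norm_num
  · refine ⟨(0, 0, 0), (1, 2, 0), ?_⟩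
    show R1 0 1 * R2 0 2 * R3 0 0 = _
    rw [R1c_0_1, R2c_0_2, R3c_0_0, MM_mul, MM_mul]
    refine MM_congr (by decide) ?_ (by intro i; simp)
    intro j
    fin_cases j <;>
      simp [h0, h1, h2, s01, s02, s12, Equiv.swap_apply_def, Fin.ext_iff] <;> norm_num
  · refine ⟨(0, 0, 0), (1, 0, 0), ?_⟩
    show R1 0 1 * R2 0 0 * R3 0 0 = _
    rw [R1c_0_1, R2c_0_0, R3c_0_0, MM_mul, MM_mul]
    refine MM_congr (by decide) ?_ (by intro i; simp)
    intro j
    fin_cases j <;>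
      simp [h0, h1, h2, s01, s02, s12, Equiv.swap_apply_def, Fin.ext_iff] <;> norm_num
  · refine ⟨(0, 0, 1), (1, 0, 0), ?_⟩
    show R1 0 1 * R2 0 0 * R3 1 0 = _
    rw [R1c_0_1, R2c_0_0, R3c_1_0, MM_mul, MM_mul]
    refine MM_congr (by decide) ?_ (by intro i; simp)
    intro j
    fin_cases j <;>
      simp [h0, h1, h2, s01, s02, s12, Equiv.swap_apply_def, Fin.ext_iff] <;> norm_num
  · refine ⟨(0, 0, 0), (1, 2, 2), ?_⟩
    show R1 0 1 * R2 0 2 * R3 0 2 = _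
    rw [R1c_0_1, R2c_0_2, R3c_0_2, MM_mul, MM_mul]
    refine MM_congr (by decide) ?_ (by intro i; simp)
    intro j
    fin_cases j <;>
      simp [h0, h1, h2, s01, s02, s12, Equiv.swap_apply_def, Fin.ext_iff] <;> norm_num
  · refine ⟨(0, 0, 1), (1, 2, 2), ?_⟩
    show R1 0 1 * R2 0 2 * R3 1 2 = _
    rw [R1c_0_1, R2c_0_2, R3c_1_2, MM_mul, MM_mul]
    refine MM_congr (by decide) ?_ (by intro i; simp)
    intro j
    fin_cases j <;>
      simp [h0, h1, h2, s01, s02, s12, Equiv.swap_apply_def, Fin.ext_iff] <;> norm_num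
  · refine ⟨(0, 0, 1), (1, 0, 2), ?_⟩
    show R1 0 1 * R2 0 0 * R3 1 2 = _
    rw [R1c_0_1, R2c_0_0, R3c_1_2, MM_mul, MM_mul]
    refine MM_congr (by decide) ?_ (by intro i; simp)
    intro j
    fin_cases j <;>
      simp [h0, h1, h2, s01, s02, s12, Equiv.swap_apply_def, Fin.ext_iff] <;> norm_num
  · refine ⟨(0, 0, 0), (1, 0, 2), ?_⟩
    show R1 0 1 * R2 0 0 * R3 0 2 = _
    rw [R1c_0_1, R2c_0_0, R3c_0_2, MM_mul, MM_mul]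
    refine MM_congr (by decide) ?_ (by intro i; simp)
    intro j
    fin_cases j <;>
      simp [h0, h1, h2, s01, s02, s12, Equiv.swap_apply_def, Fin.ext_iff] <;> norm_num
  · refine ⟨(0, 0, 1), (0, 0, 1), ?_⟩
    show R1 0 0 * R2 0 0 * R3 1 1 = _
    rw [R1c_0_0, R2c_0_0, R3c_1_1, MM_mul, MM_mul]
    refine MM_congr (by decide) ?_ (by intro i; simp)
    intro j
    fin_cases j <;>
      simp [h0, h1, h2, s01, s02, s12, Equiv.swap_apply_def, Fin.ext_iff] <;> norm_num
  · refine ⟨(0, 0, 0), (0, 0, 3), ?_⟩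
    show R1 0 0 * R2 0 0 * R3 0 3 = _
    rw [R1c_0_0, R2c_0_0, R3c_0_3, MM_mul, MM_mul]
    refine MM_congr (by decide) ?_ (by intro i; simp)
    intro j
    fin_cases j <;>
      simp [h0, h1, h2, s01, s02, s12, Equiv.swap_apply_def, Fin.ext_iff] <;> norm_num
  · refine ⟨(0, 0, 0), (0, 2, 1), ?_⟩
    show R1 0 0 * R2 0 2 * R3 0 1 = _
    rw [R1c_0_0, R2c_0_2, R3c_0_1, MM_mul, MM_mul]
    refine MM_congr (by decide) ?_ (by intro i; simp)
    intro j
    fin_cases j <;>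
      simp [h0, h1, h2, s01, s02, s12, Equiv.swap_apply_def, Fin.ext_iff] <;> norm_num
  · refine ⟨(0, 0, 1), (0, 2, 3), ?_⟩
    show R1 0 0 * R2 0 2 * R3 1 3 = _
    rw [R1c_0_0, R2c_0_2, R3c_1_3, MM_mul, MM_mul]
    refine MM_congr (by decide) ?_ (by intro i; simp)
    intro j
    fin_cases j <;>
      simp [h0, h1, h2, s01, s02, s12, Equiv.swap_apply_def, Fin.ext_iff] <;> norm_num
  · refine ⟨(0, 0, 0), (0, 0, 1), ?_⟩
    show R1 0 0 * R2 0 0 * R3 0 1 = _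
    rw [R1c_0_0, R2c_0_0, R3c_0_1, MM_mul, MM_mul]
    refine MM_congr (by decide) ?_ (by intro i; simp)
    intro j
    fin_cases j <;>
      simp [h0, h1, h2, s01, s02, s12, Equiv.swap_apply_def, Fin.ext_iff] <;> norm_num
  · refine ⟨(0, 0, 1), (0, 0, 3), ?_⟩
    show R1 0 0 * R2 0 0 * R3 1 3 = _
    rw [R1c_0_0, R2c_0_0, R3c_1_3, MM_mul, MM_mul]
    refine MM_congr (by decide) ?_ (by intro i; simp)
    intro j
    fin_cases j <;>
      simp [h0, h1, h2, s01, s02, s12, Equiv.swap_apply_def, Fin.ext_iff] <;> norm_num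
  · refine ⟨(0, 0, 1), (0, 2, 1), ?_⟩
    show R1 0 0 * R2 0 2 * R3 1 1 = _
    rw [R1c_0_0, R2c_0_2, R3c_1_1, MM_mul, MM_mul]
    refine MM_congr (by decide) ?_ (by intro i; simp)
    intro j
    fin_cases j <;>
      simp [h0, h1, h2, s01, s02, s12, Equiv.swap_apply_def, Fin.ext_iff] <;> norm_num
  · refine ⟨(0, 0, 0), (0, 2, 3), ?_⟩
    show R1 0 0 * R2 0 2 * R3 0 3 = _
    rw [R1c_0_0, R2c_0_2, R3c_0_3, MM_mul, MM_mul]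
    refine MM_congr (by decide) ?_ (by intro i; simp)
    intro j
    fin_cases j <;>
      simp [h0, h1, h2, s01, s02, s12, Equiv.swap_apply_def, Fin.ext_iff] <;> norm_num
  · refine ⟨(0, 0, 1), (0, 1, 0), ?_⟩
    show R1 0 0 * R2 0 1 * R3 1 0 = _
    rw [R1c_0_0, R2c_0_1, R3c_1_0, MM_mul, MM_mul]
    refine MM_congr (by decide) ?_ (by intro i; simp)
    intro j
    fin_cases j <;>
      simp [h0, h1, h2, s01, s02, s12, Equiv.swap_apply_def, Fin.ext_iff] <;> norm_num
  · refine ⟨(0, 0, 0), (0, 1, 0), ?_⟩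
    show R1 0 0 * R2 0 1 * R3 0 0 = _
    rw [R1c_0_0, R2c_0_1, R3c_0_0, MM_mul, MM_mul]
    refine MM_congr (by decide) ?_ (by intro i; simp)
    intro j
    fin_cases j <;>
      simp [h0, h1, h2, s01, s02, s12, Equiv.swap_apply_def, Fin.ext_iff] <;> norm_num
  · refine ⟨(0, 0, 0), (0, 3, 0), ?_⟩
    show R1 0 0 * R2 0 3 * R3 0 0 = _
    rw [R1c_0_0, R2c_0_3, R3c_0_0, MM_mul, MM_mul]
    refine MM_congr (by decide) ?_ (by intro i; simp)
    intro j
    fin_cases j <;>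
      simp [h0, h1, h2, s01, s02, s12, Equiv.swap_apply_def, Fin.ext_iff] <;> norm_num
  · refine ⟨(0, 0, 1), (0, 3, 0), ?_⟩
    show R1 0 0 * R2 0 3 * R3 1 0 = _
    rw [R1c_0_0, R2c_0_3, R3c_1_0, MM_mul, MM_mul]
    refine MM_congr (by decide) ?_ (by intro i; simp)
    intro j
    fin_cases j <;>
      simp [h0, h1, h2, s01, s02, s12, Equiv.swap_apply_def, Fin.ext_iff] <;> norm_num
  · refine ⟨(0, 0, 0), (0, 1, 2), ?_⟩
    show R1 0 0 * R2 0 1 * R3 0 2 = _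
    rw [R1c_0_0, R2c_0_1, R3c_0_2, MM_mul, MM_mul]
    refine MM_congr (by decide) ?_ (by intro i; simp)
    intro j
    fin_cases j <;>
      simp [h0, h1, h2, s01, s02, s12, Equiv.swap_apply_def, Fin.ext_iff] <;> norm_num
  · refine ⟨(0, 0, 1), (0, 1, 2), ?_⟩
    show R1 0 0 * R2 0 1 * R3 1 2 = _
    rw [R1c_0_0, R2c_0_1, R3c_1_2, MM_mul, MM_mul]
    refine MM_congr (by decide) ?_ (by intro i; simp)
    intro j
    fin_cases j <;>
      simp [h0, h1, h2, s01, s02, s12, Equiv.swap_apply_def, Fin.ext_iff] <;> norm_num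
  · refine ⟨(0, 0, 1), (0, 3, 2), ?_⟩
    show R1 0 0 * R2 0 3 * R3 1 2 = _
    rw [R1c_0_0, R2c_0_3, R3c_1_2, MM_mul, MM_mul]
    refine MM_congr (by decide) ?_ (by intro i; simp)
    intro j
    fin_cases j <;>
      simp [h0, h1, h2, s01, s02, s12, Equiv.swap_apply_def, Fin.ext_iff] <;> norm_num
  · refine ⟨(0, 0, 0), (0, 3, 2), ?_⟩
    show R1 0 0 * R2 0 3 * R3 0 2 = _
    rw [R1c_0_0, R2c_0_3, R3c_0_2, MM_mul, MM_mul]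
    refine MM_congr (by decide) ?_ (by intro i; simp)
    intro j
    fin_cases j <;>
      simp [h0, h1, h2, s01, s02, s12, Equiv.swap_apply_def, Fin.ext_iff] <;> norm_num
  · refine ⟨(0, 0, 0), (0, 1, 1), ?_⟩
    show R1 0 0 * R2 0 1 * R3 0 1 = _
    rw [R1c_0_0, R2c_0_1, R3c_0_1, MM_mul, MM_mul]
    refine MM_congr (by decide) ?_ (by intro i; simp)
    intro j
    fin_cases j <;>
      simp [h0, h1, h2, s01, s02, s12, Equiv.swap_apply_def, Fin.ext_iff] <;> norm_num
  · refine ⟨(0, 0, 1), (0, 1, 3), ?_⟩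
    show R1 0 0 * R2 0 1 * R3 1 3 = _
    rw [R1c_0_0, R2c_0_1, R3c_1_3, MM_mul, MM_mul]
    refine MM_congr (by decide) ?_ (by intro i; simp)
    intro j
    fin_cases j <;>
      simp [h0, h1, h2, s01, s02, s12, Equiv.swap_apply_def, Fin.ext_iff] <;> norm_num
  · refine ⟨(0, 0, 1), (0, 3, 1), ?_⟩
    show R1 0 0 * R2 0 3 * R3 1 1 = _
    rw [R1c_0_0, R2c_0_3, R3c_1_1, MM_mul, MM_mul]
    refine MM_congr (by decide) ?_ (by intro i; simp)
    intro j
    fin_cases j <;>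
      simp [h0, h1, h2, s01, s02, s12, Equiv.swap_apply_def, Fin.ext_iff] <;> norm_num
  · refine ⟨(0, 0, 0), (0, 3, 3), ?_⟩
    show R1 0 0 * R2 0 3 * R3 0 3 = _
    rw [R1c_0_0, R2c_0_3, R3c_0_3, MM_mul, MM_mul]
    refine MM_congr (by decide) ?_ (by intro i; simp)
    intro j
    fin_cases j <;>
      simp [h0, h1, h2, s01, s02, s12, Equiv.swap_apply_def, Fin.ext_iff] <;> norm_num
  · refine ⟨(0, 0, 1), (0, 1, 1), ?_⟩
    show R1 0 0 * R2 0 1 * R3 1 1 = _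
    rw [R1c_0_0, R2c_0_1, R3c_1_1, MM_mul, MM_mul]
    refine MM_congr (by decide) ?_ (by intro i; simp)
    intro j
    fin_cases j <;>
      simp [h0, h1, h2, s01, s02, s12, Equiv.swap_apply_def, Fin.ext_iff] <;> norm_num
  · refine ⟨(0, 0, 0), (0, 1, 3), ?_⟩
    show R1 0 0 * R2 0 1 * R3 0 3 = _
    rw [R1c_0_0, R2c_0_1, R3c_0_3, MM_mul, MM_mul]
    refine MM_congr (by decide) ?_ (by intro i; simp)
    intro j
    fin_cases j <;>
      simp [h0, h1, h2, s01, s02, s12, Equiv.swap_apply_def, Fin.ext_iff] <;> norm_num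
  · refine ⟨(0, 0, 0), (0, 3, 1), ?_⟩
    show R1 0 0 * R2 0 3 * R3 0 1 = _
    rw [R1c_0_0, R2c_0_3, R3c_0_1, MM_mul, MM_mul]
    refine MM_congr (by decide) ?_ (by intro i; simp)
    intro j
    fin_cases j <;>
      simp [h0, h1, h2, s01, s02, s12, Equiv.swap_apply_def, Fin.ext_iff] <;> norm_num
  · refine ⟨(0, 0, 1), (0, 3, 3), ?_⟩
    show R1 0 0 * R2 0 3 * R3 1 3 = _
    rw [R1c_0_0, R2c_0_3, R3c_1_3, MM_mul, MM_mul]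
    refine MM_congr (by decide) ?_ (by intro i; simp)
    intro j
    fin_cases j <;>
      simp [h0, h1, h2, s01, s02, s12, Equiv.swap_apply_def, Fin.ext_iff] <;> norm_num
  · refine ⟨(0, 0, 0), (1, 2, 1), ?_⟩
    show R1 0 1 * R2 0 2 * R3 0 1 = _
    rw [R1c_0_1, R2c_0_2, R3c_0_1, MM_mul, MM_mul]
    refine MM_congr (by decide) ?_ (by intro i; simp)
    intro j
    fin_cases j <;>
      simp [h0, h1, h2, s01, s02, s12, Equiv.swap_apply_def, Fin.ext_iff] <;> norm_num
  · refine ⟨(0, 0, 1), (1, 2, 3), ?_⟩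
    show R1 0 1 * R2 0 2 * R3 1 3 = _
    rw [R1c_0_1, R2c_0_2, R3c_1_3, MM_mul, MM_mul]
    refine MM_congr (by decide) ?_ (by intro i; simp)
    intro j
    fin_cases j <;>
      simp [h0, h1, h2, s01, s02, s12, Equiv.swap_apply_def, Fin.ext_iff] <;> norm_num
  · refine ⟨(0, 0, 1), (1, 0, 1), ?_⟩
    show R1 0 1 * R2 0 0 * R3 1 1 = _
    rw [R1c_0_1, R2c_0_0, R3c_1_1, MM_mul, MM_mul]
    refine MM_congr (by decide) ?_ (by intro i; simp)
    intro j
    fin_cases j <;>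
      simp [h0, h1, h2, s01, s02, s12, Equiv.swap_apply_def, Fin.ext_iff] <;> norm_num
  · refine ⟨(0, 0, 0), (1, 0, 3), ?_⟩
    show R1 0 1 * R2 0 0 * R3 0 3 = _
    rw [R1c_0_1, R2c_0_0, R3c_0_3, MM_mul, MM_mul]
    refine MM_congr (by decide) ?_ (by intro i; simp)
    intro j
    fin_cases j <;>
      simp [h0, h1, h2, s01, s02, s12, Equiv.swap_apply_def, Fin.ext_iff] <;> norm_num
  · refine ⟨(0, 0, 1), (1, 2, 1), ?_⟩
    show R1 0 1 * R2 0 2 * R3 1 1 = _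
    rw [R1c_0_1, R2c_0_2, R3c_1_1, MM_mul, MM_mul]
    refine MM_congr (by decide) ?_ (by intro i; simp)
    intro j
    fin_cases j <;>
      simp [h0, h1, h2, s01, s02, s12, Equiv.swap_apply_def, Fin.ext_iff] <;> norm_num
  · refine ⟨(0, 0, 0), (1, 2, 3), ?_⟩
    show R1 0 1 * R2 0 2 * R3 0 3 = _
    rw [R1c_0_1, R2c_0_2, R3c_0_3, MM_mul, MM_mul]
    refine MM_congr (by decide) ?_ (by intro i; simp)
    intro j
    fin_cases j <;>
      simp [h0, h1, h2, s01, s02, s12, Equiv.swap_apply_def, Fin.ext_iff] <;> norm_num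
  · refine ⟨(0, 0, 0), (1, 0, 1), ?_⟩
    show R1 0 1 * R2 0 0 * R3 0 1 = _
    rw [R1c_0_1, R2c_0_0, R3c_0_1, MM_mul, MM_mul]
    refine MM_congr (by decide) ?_ (by intro i; simp)
    intro j
    fin_cases j <;>
      simp [h0, h1, h2, s01, s02, s12, Equiv.swap_apply_def, Fin.ext_iff] <;> norm_num
  · refine ⟨(0, 0, 1), (1, 0, 3), ?_⟩
    show R1 0 1 * R2 0 0 * R3 1 3 = _
    rw [R1c_0_1, R2c_0_0, R3c_1_3, MM_mul, MM_mul]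
    refine MM_congr (by decide) ?_ (by intro i; simp)
    intro j
    fin_cases j <;>
      simp [h0, h1, h2, s01, s02, s12, Equiv.swap_apply_def, Fin.ext_iff] <;> norm_num

/-! ### The characterizing set -/

def Eset : Set (Matrix (Fin 4) (Fin 4) ℝ) :=
  {A | ∃ σ ε v, (∀ i, ε i = 1 ∨ ε i = -1) ∧ (∀ i, ∃ n : ℤ, v i = (n : ℝ)) ∧ A = MM σ ε v}

lemma E_mul {A B : Matrix (Fin 4) (Fin 4) ℝ} (hA : A ∈ Eset) (hB : B ∈ Eset) :
    A * B ∈ Eset := by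
  obtain ⟨σ, ε, v, hε, hv, rfl⟩ := hA
  obtain ⟨σ', ε', v', hε', hv', rfl⟩ := hB
  refine ⟨σ * σ', _, _, ?_, ?_, (MM_mul σ σ' ε ε' v v')⟩
  · intro j
    rcases hε (σ' j) with h | h <;> rcases hε' j with h' | h' <;>
      rw [h, h'] <;> norm_num
  · intro i
    obtain ⟨n, hn⟩ := hv i
    obtain ⟨n', hn'⟩ := hv' (σ⁻¹ i)
    rcases hε (σ⁻¹ i) with h | h
    · exact ⟨n' + n, by rw [h, hn, hn']; push_cast; ring⟩
    · exact ⟨-n' + n, by rw [h, hn, hn']; push_cast; ring⟩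

lemma p4m_sub_E {A : Matrix (Fin 4) (Fin 4) ℝ} (hA : A ∈ p4m) : A ∈ Eset := by
  obtain ⟨m, r, t, rfl⟩ := hA
  have h1 : R1 m.1 r.1 ∈ Eset := by
    obtain ⟨σ, ε, hε, h⟩ := R1_mm m.1 r.1
    exact ⟨σ, ε, _, hε, fun i => ⟨0, by norm_num⟩, h⟩
  have h2 : R2 m.2.1 r.2.1 ∈ Eset := by
    obtain ⟨σ, ε, hε, h⟩ := R2_mm m.2.1 r.2.1
    exact ⟨σ, ε, _, hε, fun i => ⟨0, by norm_num⟩, h⟩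
  have h3 : R3 m.2.2 r.2.2 ∈ Eset := by
    obtain ⟨σ, ε, hε, h⟩ := R3_mm m.2.2 r.2.2
    exact ⟨σ, ε, _, hε, fun i => ⟨0, by norm_num⟩, h⟩
  have h4 : T t ∈ Eset := by
    refine ⟨1, fun _ => 1, _, fun i => Or.inl rfl, ?_, T_mm t⟩
    intro i
    fin_cases i
    · exact ⟨t.1, by norm_num⟩
    · exact ⟨t.2.1, by norm_num⟩
    · exact ⟨t.2.2, by norm_num⟩
  exact E_mul (E_mul (E_mul h1 h2) h3) h4

lemma E_sub_p4m {A : Matrix (Fin 4) (Fin 4) ℝ} (hA : A ∈ Eset) : A ∈ p4m := by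
  obtain ⟨σ, ε, v, hε, hv, rfl⟩ := hA
  have hw' : ∀ j, ∃ n : ℤ, ε j * v (σ j) = (n : ℝ) := by
    intro j
    obtain ⟨n, hn⟩ := hv (σ j)
    rcases hε j with h | h
    · exact ⟨n, by rw [h, hn]; ring⟩
    · exact ⟨-n, by rw [h, hn]; push_cast; ring⟩
  obtain ⟨n0, hn0⟩ := hw' 0
  obtain ⟨n1, hn1⟩ := hw' 1
  obtain ⟨n2, hn2⟩ := hw' 2
  have hw : ∀ j, (![(n0 : ℝ), (n1 : ℝ), (n2 : ℝ)] : Fin 3 → ℝ) j = ε j * v (σ j) := by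
    intro j
    fin_cases j
    · simpa using hn0.symm
    · simpa using hn1.symm
    · simpa using hn2.symm
  have key : MM σ ε v = MM σ ε (fun _ => 0) * T (n0, n1, n2) := by
    rw [T_mm, MM_mul]
    refine (MM_congr (by rw [mul_one]) (by intro j; simp) ?_).symm
    intro i
    have e1 : (![(n0 : ℝ), (n1 : ℝ), (n2 : ℝ)] : Fin 3 → ℝ) (σ⁻¹ i) = ε (σ⁻¹ i) * v i := by
      rw [hw (σ⁻¹ i), show σ (σ⁻¹ i) = i from (Equiv.eq_symm_apply σ).mp rfl]
    rw [e1]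
    rcases hε (σ⁻¹ i) with h | h <;> rw [h] <;> ring
  obtain ⟨m, r, hsurj⟩ := surj σ ε hε
  exact ⟨m, r, (n0, n1, n2), by rw [key, ← hsurj]; rfl⟩

/-- The set `p4m` is a subgroup of `GL₄(ℝ)`: it contains the identity matrix, is closed
under matrix multiplication, and every element is invertible with inverse again in `p4m`;
thus `p4m` is a symmetry group under matrix multiplication. -/
theorem p4m_is_subgroup :
    (1 : Matrix (Fin 4) (Fin 4) ℝ) ∈ p4m ∧
    (∀ A B : Matrix (Fin 4) (Fin 4) ℝ, A ∈ p4m → B ∈ p4m → A * B ∈ p4m) ∧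
    (∀ A : Matrix (Fin 4) (Fin 4) ℝ, A ∈ p4m → IsUnit A ∧ A⁻¹ ∈ p4m) := by
  refine ⟨?_, ?_, ?_⟩
  · exact E_sub_p4m ⟨1, fun _ => 1, fun _ => 0, fun i => Or.inl rfl,
      fun i => ⟨0, by norm_num⟩, MM_one.symm⟩
  · intro A B hA hB
    exact E_sub_p4m (E_mul (p4m_sub_E hA) (p4m_sub_E hB))
  · intro A hA
    obtain ⟨σ, ε, v, hε, hv, rfl⟩ := p4m_sub_E hA
    set B := MM σ⁻¹ (fun j => ε (σ⁻¹ j)) (fun k => -(ε k * v (σ k))) with hB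
    have hAB : MM σ ε v * B = 1 := by
      rw [hB, MM_mul, ← MM_one]
      refine MM_congr (by simp) ?_ ?_
      · intro j
        rcases hε (σ⁻¹ j) with h | h <;> rw [h] <;> norm_num
      · intro i
        rw [show σ (σ⁻¹ i) = i from (Equiv.eq_symm_apply σ).mp rfl]
        rcases hε (σ⁻¹ i) with h | h <;> rw [h] <;> ring
    have hBA : B * MM σ ε v = 1 := by
      rw [hB, MM_mul, ← MM_one]
      refine MM_congr (by simp) ?_ ?_
      · intro j
        rw [show σ⁻¹ (σ j) = j from Equiv.Perm.inv_eq_iff_eq.mpr rfl]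
        rcases hε j with h | h <;> rw [h] <;> norm_num
      · intro i
        rw [inv_inv, show σ⁻¹ (σ i) = i from Equiv.Perm.inv_eq_iff_eq.mpr rfl]
        ring
    refine ⟨⟨⟨_, B, hAB, hBA⟩, rfl⟩, ?_⟩
    rw [Matrix.inv_eq_right_inv hAB]
    refine E_sub_p4m ⟨σ⁻¹, _, _, fun j => hε (σ⁻¹ j), ?_, rfl⟩
    intro k
    obtain ⟨n, hn⟩ := hv (σ k)
    rcases hε k with h | h
    · exact ⟨-n, by rw [h, hn]; push_cast; ring⟩
    · exact ⟨n, by rw [h, hn]; push_cast; ring⟩
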